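/- For integers m ≥ 2, n ≥ 1 with m+n ≥ 4 and m+n even, the spider Sp(2n+1, 2m+1, n+m+1) has local antimagic chromatic number 4. -/

import Mathlib

open SimpleGraph

/-- The induced vertex sum of an edge labeling. -/
noncomputable def vertexSum {V : Type*} (G : SimpleGraph V) (f : Sym2 V → ℕ) (x : V) : ℕ :=
  ∑ᶠ y ∈ G.neighborSet x, f s(x, y)

/-- `f` is a local antimagic labeling of `G`. -/
def IsLocalAntimagic {V : Type*} (G : SimpleGraph V) (f : Sym2 V → ℕ) : Prop :=
  Set.BijOn f G.edgeSet (Set.Icc 1 G.edgeSet.ncard) ∧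
  ∀ ⦃x y : V⦄, G.Adj x y → vertexSum G f x ≠ vertexSum G f y

/-- The number of distinct induced vertex labels of `f`. -/
noncomputable def colorCount {V : Type*} (G : SimpleGraph V) (f : Sym2 V → ℕ) : ℕ :=
  (Set.range (vertexSum G f)).ncard

/-- The local antimagic chromatic number. -/
noncomputable def chiLA {V : Type*} (G : SimpleGraph V) : ℕ :=
  sInf {n | ∃ f : Sym2 V → ℕ, IsLocalAntimagic G f ∧ colorCount G f = n}

/-- A pendant vertex: a vertex of degree 1. -/
def IsPendant {V : Type*} (G : SimpleGraph V) (x : V) : Prop :=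
  (G.neighborSet x).ncard = 1

/-- A pendant edge: an edge incident to a pendant vertex. -/
def IsPendantEdge {V : Type*} (G : SimpleGraph V) (e : Sym2 V) : Prop :=
  e ∈ G.edgeSet ∧ ∃ x ∈ e, IsPendant G x

/-- The spider graph with `d` legs of lengths `y i`: the core is `none`, and leg `i`
consists of vertices `some ⟨i, j⟩` for `j : Fin (y i)`, forming a path from the core. -/
def spider (d : ℕ) (y : Fin d → ℕ) : SimpleGraph (Option (Σ i : Fin d, Fin (y i))) :=
  SimpleGraph.fromRel (fun u v =>
    ∃ (i : Fin d) (j : Fin (y i)), (u = none ∧ v = some ⟨i, j⟩ ∧ (j : ℕ) = 0) ∨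
      (∃ k : Fin (y i), u = some ⟨i, j⟩ ∧ v = some ⟨i, k⟩ ∧ (j : ℕ) + 1 = (k : ℕ)))

set_option linter.unusedSectionVars false

namespace Sp
variable (m n : ℕ)

def Z (p : ℕ) : ℕ := if p % 2 = 1 then p else 3*(m+n)+2 - p
def q : ℕ := 3*(m+n)+3
def C : ℕ := 4*(m+n)+4
def a : ℕ := min n m
def b : ℕ := max n m
def sidx : Fin 3 := if n ≤ m then 0 else 1
def lidx : Fin 3 := if n ≤ m then 1 else 0
def lab (i : Fin 3) (j : ℕ) : ℕ :=
  if i = 2 then Z m n (m+n - j)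
  else if i = sidx m n then (if j = 2*(a m n) then q m n else Z m n (m+n + 2*(a m n) - j))
  else if j < 2*(b m n) - 2*(a m n) + 2 then Z m n (3*(m+n)+2 - 2*(a m n) - j)
  else Z m n (3*(m+n)+1 - 2*(b m n) + j)

def yy : Fin 3 → ℕ := ![2*n+1, 2*m+1, n+m+1]

lemma hab : a m n + b m n = m + n := by unfold a b; omega
lemma haleb : a m n ≤ b m n := by unfold a b; omega
lemma y2 : yy m n 2 = m+n+1 := by simp [yy]; omega
lemma ys : yy m n (sidx m n) = 2*(a m n)+1 := by
  unfold yy sidx a; split_ifs with h <;> simp <;> omega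
lemma yl : yy m n (lidx m n) = 2*(b m n)+1 := by
  unfold yy lidx b; split_ifs with h <;> simp <;> omega
lemma s_ne_two : sidx m n ≠ 2 := by unfold sidx; split_ifs <;> decide
lemma l_ne_two : lidx m n ≠ 2 := by unfold lidx; split_ifs <;> decide
lemma s_ne_l : sidx m n ≠ lidx m n := by unfold sidx lidx; split_ifs <;> decide
lemma cover (i : Fin 3) : i = 2 ∨ i = sidx m n ∨ i = lidx m n := by
  unfold sidx lidx; split_ifs <;> fin_cases i <;> simp

lemma lab2 (j : ℕ) : lab m n 2 j = Z m n (m+n-j) := by simp [lab]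
lemma labS (j : ℕ) :
    lab m n (sidx m n) j = if j = 2*(a m n) then q m n else Z m n (m+n + 2*(a m n) - j) := by
  rw [lab, if_neg (s_ne_two m n), if_pos rfl]
lemma labL (j : ℕ) :
    lab m n (lidx m n) j = if j < 2*(b m n) - 2*(a m n) + 2 then Z m n (3*(m+n)+2 - 2*(a m n) - j)
      else Z m n (3*(m+n)+1 - 2*(b m n) + j) := by
  rw [lab, if_neg (l_ne_two m n), if_neg (Ne.symm (s_ne_l m n))]

section hyp
variable (hm : 2 ≤ m) (hn : 1 ≤ n) (hmn : 4 ≤ m + n) (he : (m+n) % 2 = 0)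
include hm hn hmn he

lemma ha1 : 1 ≤ a m n := by unfold a; omega
lemma sum_even (i : Fin 3) (j : ℕ) (hj : j % 2 = 0) (hj2 : j + 2 ≤ yy m n i) :
    lab m n i j + lab m n i (j+1) = 3*(m+n)+1 := by
  have hab := hab m n; have ha1 := ha1 m n hm hn hmn he; have hal := haleb m n
  rcases cover m n i with rfl | rfl | rfl
  · rw [y2] at hj2; rw [lab2, lab2]; unfold Z; split_ifs <;> omega
  · rw [ys] at hj2; rw [labS, labS]; unfold Z q; split_ifs <;> omega
  · rw [yl] at hj2; rw [labL, labL]; unfold Z; split_ifs <;> omega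

lemma sum_odd (i : Fin 3) (j : ℕ) (hj : j % 2 = 1) (hj2 : j + 2 ≤ yy m n i) :
    lab m n i j + lab m n i (j+1) = 3*(m+n)+3 ∨ lab m n i j + lab m n i (j+1) = C m n := by
  have hab := hab m n; have ha1 := ha1 m n hm hn hmn he; have hal := haleb m n
  rcases cover m n i with rfl | rfl | rfl
  · rw [y2] at hj2; rw [lab2, lab2]; unfold Z C; split_ifs <;> omega
  · rw [ys] at hj2; rw [labS, labS]; unfold Z q C; split_ifs <;> omega
  · rw [yl] at hj2; rw [labL, labL]; unfold Z C; split_ifs <;> omega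

lemma junctionS : lab m n (sidx m n) (2*(a m n)-1) + lab m n (sidx m n) (2*(a m n)) = C m n := by
  have hab := hab m n; have ha1 := ha1 m n hm hn hmn he; have hal := haleb m n
  rw [labS, labS]; unfold Z q C; split_ifs <;> omega

lemma pend2 : lab m n 2 (m+n) = 3*(m+n)+2 := by
  rw [lab2]; unfold Z; split_ifs <;> omega
lemma pendS : lab m n (sidx m n) (2*(a m n)) = q m n := by rw [labS]; simp
lemma pendL : lab m n (lidx m n) (2*(b m n)) = 3*(m+n)+1 := by
  have hab := hab m n; have ha1 := ha1 m n hm hn hmn he; have hal := haleb m n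
  rw [labL]; unfold Z; split_ifs <;> omega

lemma core_sum : lab m n 0 0 + lab m n 1 0 + lab m n 2 0 = C m n := by
  have hab := hab m n; have ha1 := ha1 m n hm hn hmn he; have hal := haleb m n
  have h0 : lab m n (sidx m n) 0 + lab m n (lidx m n) 0 + lab m n 2 0 = C m n := by
    rw [labS, labL, lab2]; unfold Z q C; split_ifs <;> omega
  have : sidx m n = 0 ∧ lidx m n = 1 ∨ sidx m n = 1 ∧ lidx m n = 0 := by
    unfold sidx lidx; split_ifs <;> simp
  rcases this with ⟨h1, h2⟩ | ⟨h1, h2⟩ <;> rw [h1, h2] at h0 <;> omega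

lemma lab_bounds (i : Fin 3) (j : ℕ) (hj : j < yy m n i) :
    1 ≤ lab m n i j ∧ lab m n i j ≤ q m n := by
  have hab := hab m n; have ha1 := ha1 m n hm hn hmn he; have hal := haleb m n
  rcases cover m n i with rfl | rfl | rfl
  · rw [y2] at hj; rw [lab2]; unfold Z q; split_ifs <;> omega
  · rw [ys] at hj; rw [labS]; unfold Z q; split_ifs <;> omega
  · rw [yl] at hj; rw [labL]; unfold Z q; split_ifs <;> omega

lemma lab_inj (i i' : Fin 3) (j j' : ℕ) (hj : j < yy m n i) (hj' : j' < yy m n i')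
    (hl : lab m n i j = lab m n i' j') : i = i' ∧ j = j' := by
  have hab := hab m n; have ha1 := ha1 m n hm hn hmn he; have hal := haleb m n
  rcases cover m n i with rfl | rfl | rfl <;> rcases cover m n i' with rfl | rfl | rfl <;>
    simp only [lab2, labS, labL, y2, ys, yl] at hj hj' hl <;>
    first
      | (refine ⟨rfl, ?_⟩; simp only [Z, q] at hl; split_ifs at hl <;> omega)
      | (exfalso; simp only [Z, q] at hl; split_ifs at hl <;> omega)

lemma lab_surj (l : ℕ) (h1 : 1 ≤ l) (h2 : l ≤ q m n) :
    ∃ (i : Fin 3) (j : ℕ), j < yy m n i ∧ lab m n i j = l := by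
  have hab := hab m n; have ha1 := ha1 m n hm hn hmn he; have hal := haleb m n
  unfold q at h2
  by_cases hq : l = 3*(m+n)+3
  · refine ⟨sidx m n, 2*(a m n), by rw [ys]; omega, ?_⟩
    rw [pendS m n hm hn hmn he]; unfold q; omega
  · set p : ℕ := if l % 2 = 1 then l else 3*(m+n)+2 - l with hp
    have hZp : Z m n p = l := by unfold Z; rw [hp]; split_ifs <;> omega
    have hple : p ≤ 3*(m+n)+1 := by rw [hp]; split_ifs <;> omega
    rcases Nat.lt_or_ge p (m+n+1) with hc | hc
    · refine ⟨2, m+n-p, by rw [y2]; omega, ?_⟩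
      rw [lab2]
      have : m+n-(m+n-p) = p := by omega
      rw [this, hZp]
    rcases Nat.lt_or_ge p (m+n+2*(a m n)+1) with hc2 | hc2
    · refine ⟨sidx m n, m+n+2*(a m n)-p, by rw [ys]; omega, ?_⟩
      rw [labS, if_neg (by omega)]
      have : m+n+2*(a m n)-(m+n+2*(a m n)-p) = p := by omega
      rw [this, hZp]
    rcases Nat.lt_or_ge p (3*(m+n)+3-2*(a m n)) with hc3 | hc3
    · refine ⟨lidx m n, 3*(m+n)+2-2*(a m n)-p, by rw [yl]; omega, ?_⟩
      rw [labL, if_pos (by omega)]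
      have : 3*(m+n)+2-2*(a m n)-(3*(m+n)+2-2*(a m n)-p) = p := by omega
      rw [this, hZp]
    · refine ⟨lidx m n, p-(3*(m+n)+1-2*(b m n)), by rw [yl]; omega, ?_⟩
      rw [labL, if_neg (by omega)]
      have : 3*(m+n)+1-2*(b m n)+(p-(3*(m+n)+1-2*(b m n))) = p := by omega
      rw [this, hZp]

end hyp

abbrev V := Option (Σ i : Fin 3, Fin (yy m n i))
def G : SimpleGraph (V m n) := spider 3 (yy m n)
def vtx (i : Fin 3) (j : ℕ) (h : j < yy m n i) : V m n := some ⟨i, ⟨j, h⟩⟩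

lemma ypos (i : Fin 3) : 0 < yy m n i := by fin_cases i <;> simp [yy]

lemma adj_none (v : V m n) :
    (G m n).Adj none v ↔ ∃ i : Fin 3, v = vtx m n i 0 (ypos m n i) := by
  rw [G, spider, fromRel_adj]
  constructor
  · rintro ⟨hne, h | h⟩
    · obtain ⟨i, j, h⟩ := h
      rcases h with ⟨-, rfl, hj0⟩ | ⟨k, hu, -, -⟩
      · have hj : j = ⟨0, ypos m n i⟩ := Fin.ext hj0
        exact ⟨i, by rw [hj]; rfl⟩
      · exact absurd hu (by simp)
    · obtain ⟨i, j, h⟩ := h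
      rcases h with ⟨-, hv, -⟩ | ⟨k, -, hv, -⟩
      · exact absurd hv (by simp)
      · exact absurd hv (by simp)
  · rintro ⟨i, rfl⟩
    exact ⟨by simp [vtx], Or.inl ⟨i, ⟨0, ypos m n i⟩, Or.inl ⟨rfl, rfl, rfl⟩⟩⟩

lemma adj_some (i : Fin 3) (j : Fin (yy m n i)) (v : V m n) :
    (G m n).Adj (some ⟨i, j⟩) v ↔ ((j : ℕ) = 0 ∧ v = none) ∨
      (∃ k : Fin (yy m n i), ((k : ℕ) + 1 = (j : ℕ) ∨ (j : ℕ) + 1 = (k : ℕ)) ∧ v = some ⟨i, k⟩) := by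
  rw [G, spider, fromRel_adj]
  constructor
  · rintro ⟨hne, h | h⟩
    · obtain ⟨i', j', h⟩ := h
      rcases h with ⟨hu, -, -⟩ | ⟨k, hu, rfl, hk⟩
      · exact absurd hu (by simp)
      · obtain ⟨rfl, hj⟩ := by simpa [Sigma.mk.inj_iff] using hu
        rw [heq_eq_eq] at hj; subst hj
        exact Or.inr ⟨k, Or.inr hk, rfl⟩
    · obtain ⟨i', j', h⟩ := h
      rcases h with ⟨rfl, hv, hj0⟩ | ⟨k, rfl, hv, hk⟩
      · obtain ⟨rfl, hj⟩ := by simpa [Sigma.mk.inj_iff] using hv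
        rw [heq_eq_eq] at hj; subst hj
        exact Or.inl ⟨hj0, rfl⟩
      · obtain ⟨rfl, hj⟩ := by simpa [Sigma.mk.inj_iff] using hv
        rw [heq_eq_eq] at hj; subst hj
        exact Or.inr ⟨j', Or.inl hk, rfl⟩
  · rintro (⟨hj0, rfl⟩ | ⟨k, hk | hk, rfl⟩)
    · exact ⟨by simp, Or.inr ⟨i, j, Or.inl ⟨rfl, rfl, hj0⟩⟩⟩
    · refine ⟨?_, Or.inr ⟨i, k, Or.inr ⟨j, rfl, rfl, hk⟩⟩⟩
      intro h
      injection h with h'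
      obtain ⟨-, h2⟩ := Sigma.mk.inj_iff.mp h'
      rw [heq_eq_eq] at h2; subst h2; omega
    · refine ⟨?_, Or.inl ⟨i, j, Or.inr ⟨k, rfl, rfl, hk⟩⟩⟩
      intro h
      injection h with h'
      obtain ⟨-, h2⟩ := Sigma.mk.inj_iff.mp h'
      rw [heq_eq_eq] at h2; subst h2; omega

def gg : V m n → ℕ := fun v => match v with | none => 0 | some ⟨i,j⟩ => lab m n i j.val
def dep : V m n → ℕ := fun v => match v with | none => 0 | some ⟨_,j⟩ => j.val + 1
def F : V m n → V m n → ℕ := fun u v =>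
  if dep m n u < dep m n v then gg m n v else if dep m n v < dep m n u then gg m n u else 0
def f : Sym2 (V m n) → ℕ := Sym2.lift ⟨F m n, by intro u v; unfold F; split_ifs <;> omega⟩

lemma f_core (i : Fin 3) (h : 0 < yy m n i) : f m n s(none, vtx m n i 0 h) = lab m n i 0 := by
  simp [f, F, dep, gg, vtx]

lemma f_step (i : Fin 3) (j k : ℕ) (hj : j < yy m n i) (hk : k < yy m n i) (hjk : j < k) :
    f m n s(vtx m n i j hj, vtx m n i k hk) = lab m n i k := by
  have h1 : j+1 < k+1 := by omega
  simp [f, F, dep, gg, vtx, h1]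

lemma vtx_ne (i i' : Fin 3) (j j' : ℕ) (h : j < yy m n i) (h' : j' < yy m n i')
    (hne : i ≠ i' ∨ j ≠ j') : vtx m n i j h ≠ vtx m n i' j' h' := by
  intro hc
  injection hc with hc'
  obtain ⟨h1, h2⟩ := Sigma.mk.inj_iff.mp hc'
  subst h1; rw [heq_eq_eq] at h2
  rcases hne with h3 | h3
  · exact h3 rfl
  · exact h3 (by simpa using congrArg Fin.val h2)

lemma nbrs_core :
    (G m n).neighborSet none = {vtx m n 0 0 (ypos m n 0), vtx m n 1 0 (ypos m n 1),
      vtx m n 2 0 (ypos m n 2)} := by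
  ext v
  rw [mem_neighborSet, adj_none]
  constructor
  · rintro ⟨i, rfl⟩
    fin_cases i
    · exact Set.mem_insert _ _
    · exact Set.mem_insert_iff.mpr (Or.inr (Set.mem_insert _ _))
    · exact Set.mem_insert_iff.mpr (Or.inr (Set.mem_insert_iff.mpr (Or.inr rfl)))
  · rintro (rfl | rfl | rfl)
    exacts [⟨0, rfl⟩, ⟨1, rfl⟩, ⟨2, rfl⟩]

lemma nbrs_int (i : Fin 3) (j : ℕ) (h2 : j + 1 < yy m n i) :
    (G m n).neighborSet (vtx m n i j (by omega)) =
      (if j = 0 then {none} else {vtx m n i (j-1) (by omega)}) ∪ {vtx m n i (j+1) h2} := by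
  ext v
  rw [mem_neighborSet, vtx, adj_some]
  constructor
  · rintro (⟨hj0, rfl⟩ | ⟨k, hk | hk, rfl⟩)
    · have hj : j = 0 := hj0
      simp [hj]
    · have hk' : (k:ℕ) + 1 = j := hk
      have hj : ¬ j = 0 := by omega
      have hkk : k = ⟨j-1, by omega⟩ := Fin.ext (show (k:ℕ) = j-1 by omega)
      rw [hkk]
      simp only [Set.mem_union, if_neg hj, Set.mem_singleton_iff]
      left; rfl
    · have hk' : j + 1 = (k:ℕ) := hk
      have hkk : k = ⟨j+1, h2⟩ := Fin.ext (show (k:ℕ) = j+1 by omega)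
      rw [hkk]
      simp only [Set.mem_union, Set.mem_singleton_iff]
      right; rfl
  · intro hv
    rw [Set.mem_union] at hv
    rcases hv with hv | hv
    · split_ifs at hv with hj0
      · rw [Set.mem_singleton_iff] at hv; subst hv
        exact Or.inl ⟨by simp [hj0], rfl⟩
      · rw [Set.mem_singleton_iff] at hv; subst hv
        refine Or.inr ⟨⟨j-1, by omega⟩, Or.inl ?_, rfl⟩
        show (j-1) + 1 = j
        omega
    · rw [Set.mem_singleton_iff] at hv; subst hv
      exact Or.inr ⟨⟨j+1, h2⟩, Or.inr rfl, rfl⟩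

lemma nbrs_pend (i : Fin 3) (j : ℕ) (h1 : 1 ≤ j) (h2 : j + 1 = yy m n i) :
    (G m n).neighborSet (vtx m n i j (by omega)) = {vtx m n i (j-1) (by omega)} := by
  ext v
  rw [mem_neighborSet, vtx, adj_some]
  constructor
  · rintro (⟨hj0, rfl⟩ | ⟨k, hk | hk, rfl⟩)
    · have hj : j = 0 := hj0
      omega
    · have hk' : (k:ℕ) + 1 = j := hk
      have hkk : k = ⟨j-1, by omega⟩ := Fin.ext (show (k:ℕ) = j-1 by omega)
      rw [hkk]; rfl
    · have hk' : j + 1 = (k:ℕ) := hk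
      have := k.isLt
      omega
  · rw [Set.mem_singleton_iff]
    rintro rfl
    refine Or.inr ⟨⟨j-1, by omega⟩, Or.inl ?_, rfl⟩
    show (j-1) + 1 = j
    omega

def edg (i : Fin 3) (j : ℕ) (h : j < yy m n i) : Sym2 (V m n) :=
  if j = 0 then s(none, vtx m n i 0 (by omega)) else s(vtx m n i (j-1) (by omega), vtx m n i j h)


section geng
variable (g : Sym2 (V m n) → ℕ)

lemma gvs_core : vertexSum (G m n) g none =
    g s(none, vtx m n 0 0 (ypos m n 0)) + g s(none, vtx m n 1 0 (ypos m n 1)) +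
      g s(none, vtx m n 2 0 (ypos m n 2)) := by
  have e01 : vtx m n 0 0 (ypos m n 0) ≠ vtx m n 1 0 (ypos m n 1) :=
    vtx_ne m n _ _ _ _ _ _ (Or.inl (by decide))
  have e02 : vtx m n 0 0 (ypos m n 0) ≠ vtx m n 2 0 (ypos m n 2) :=
    vtx_ne m n _ _ _ _ _ _ (Or.inl (by decide))
  have e12 : vtx m n 1 0 (ypos m n 1) ≠ vtx m n 2 0 (ypos m n 2) :=
    vtx_ne m n _ _ _ _ _ _ (Or.inl (by decide))
  rw [vertexSum, nbrs_core]
  rw [show ({vtx m n 0 0 (ypos m n 0), vtx m n 1 0 (ypos m n 1), vtx m n 2 0 (ypos m n 2)} :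
      Set (V m n)) =
      (↑({vtx m n 0 0 (ypos m n 0), vtx m n 1 0 (ypos m n 1), vtx m n 2 0 (ypos m n 2)} :
      Finset (V m n)) : Set (V m n)) by simp]
  rw [finsum_mem_coe_finset]
  rw [Finset.sum_insert (by simp [e01, e02]), Finset.sum_insert (by simp [e12]),
    Finset.sum_singleton]
  ring

lemma gvs_int (i : Fin 3) (j : ℕ) (h : j < yy m n i) (h2 : j + 1 < yy m n i) :
    vertexSum (G m n) g (vtx m n i j h) =
      g (edg m n i j h) + g (edg m n i (j+1) h2) := by
  rw [vertexSum, nbrs_int m n i j h2]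
  by_cases hj : j = 0
  · subst hj
    rw [if_pos rfl, Set.singleton_union]
    rw [show (insert (none : V m n) {vtx m n i 1 h2} : Set (V m n)) =
        (↑({none, vtx m n i 1 h2} : Finset (V m n)) : Set (V m n)) by simp]
    rw [finsum_mem_coe_finset]
    rw [Finset.sum_pair (by simp [vtx])]
    rw [Sym2.eq_swap]
    unfold edg
    rw [if_pos rfl, if_neg (by omega)]
  · rw [if_neg hj, Set.singleton_union]
    have hne : vtx m n i (j-1) (by omega) ≠ vtx m n i (j+1) h2 :=
      vtx_ne m n _ _ _ _ _ _ (Or.inr (by omega))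
    rw [show (insert (vtx m n i (j-1) (by omega)) {vtx m n i (j+1) h2} : Set (V m n)) =
        (↑({vtx m n i (j-1) (by omega), vtx m n i (j+1) h2} : Finset (V m n)) : Set (V m n)) by simp]
    rw [finsum_mem_coe_finset]
    rw [Finset.sum_pair hne]
    rw [Sym2.eq_swap]
    unfold edg
    rw [if_neg hj, if_neg (by omega)]
    rfl

lemma gvs_pend (i : Fin 3) (j : ℕ) (h : j < yy m n i) (h1 : 1 ≤ j) (h2 : j + 1 = yy m n i) :
    vertexSum (G m n) g (vtx m n i j h) = g (edg m n i j h) := by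
  rw [vertexSum, nbrs_pend m n i j h1 h2, finsum_mem_singleton, Sym2.eq_swap]
  unfold edg
  rw [if_neg (by omega)]

end geng

lemma f_edg (i : Fin 3) (j : ℕ) (h : j < yy m n i) : f m n (edg m n i j h) = lab m n i j := by
  unfold edg
  split_ifs with hj
  · subst hj; exact f_core m n i _
  · exact f_step m n i (j-1) j (by omega) h (by omega)

lemma edg_mem (i : Fin 3) (j : ℕ) (h : j < yy m n i) : edg m n i j h ∈ (G m n).edgeSet := by
  unfold edg
  split_ifs with hj
  · rw [mem_edgeSet, adj_none]
    exact ⟨i, rfl⟩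
  · rw [mem_edgeSet]
    show (G m n).Adj (some ⟨i, ⟨j-1, by omega⟩⟩) _
    rw [adj_some]
    refine Or.inr ⟨⟨j, h⟩, Or.inr ?_, rfl⟩
    show (j-1) + 1 = j
    omega

lemma edge_repr {E : Sym2 (V m n)} (hE : E ∈ (G m n).edgeSet) :
    ∃ (i : Fin 3) (j : ℕ) (h : j < yy m n i), E = edg m n i j h := by
  induction E using Sym2.inductionOn with
  | hf u v =>
    rw [mem_edgeSet] at hE
    match u, v with
    | none, v =>
      obtain ⟨i, rfl⟩ := (adj_none m n v).mp hE
      exact ⟨i, 0, ypos m n i, by unfold edg; rw [if_pos rfl]⟩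
    | some ⟨i, jf⟩, v =>
      rcases (adj_some m n i jf v).mp hE with ⟨hj0, rfl⟩ | ⟨k, hk | hk, rfl⟩
      · refine ⟨i, 0, ypos m n i, ?_⟩
        unfold edg; rw [if_pos rfl, Sym2.eq_swap]
        have : jf = ⟨0, ypos m n i⟩ := Fin.ext hj0
        rw [this]; rfl
      · -- k + 1 = jf : edge between jf-1 and jf
        refine ⟨i, (jf : ℕ), jf.isLt, ?_⟩
        unfold edg; rw [if_neg (by omega), Sym2.eq_swap]
        have h1 : k = ⟨(jf:ℕ)-1, by omega⟩ := Fin.ext (show (k:ℕ) = (jf:ℕ)-1 by omega)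
        rw [h1]; rfl
      · -- jf + 1 = k
        refine ⟨i, (k : ℕ), k.isLt, ?_⟩
        unfold edg; rw [if_neg (by omega)]
        have h1 : jf = ⟨(k:ℕ)-1, by omega⟩ := Fin.ext (show (jf:ℕ) = (k:ℕ)-1 by omega)
        rw [h1]; rfl

lemma edgeSet_eq : (G m n).edgeSet =
    Set.range (fun p : Σ i : Fin 3, Fin (yy m n i) => edg m n p.1 p.2 p.2.isLt) := by
  ext E
  constructor
  · intro hE
    obtain ⟨i, j, h, rfl⟩ := edge_repr m n hE
    exact ⟨⟨i, ⟨j, h⟩⟩, rfl⟩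
  · rintro ⟨p, rfl⟩
    exact edg_mem m n p.1 p.2 p.2.isLt

section main
variable (hm : 2 ≤ m) (hn : 1 ≤ n) (hmn : 4 ≤ m + n) (he : (m+n) % 2 = 0)
include hm hn hmn he

lemma y3 (i : Fin 3) : 3 ≤ yy m n i := by fin_cases i <;> simp [yy] <;> omega

lemma edg_injective :
    Function.Injective (fun p : Σ i : Fin 3, Fin (yy m n i) => edg m n p.1 p.2 p.2.isLt) := by
  rintro ⟨i, jf⟩ ⟨i', jf'⟩ hpp
  simp only at hpp
  have hf := congrArg (f m n) hpp
  rw [f_edg, f_edg] at hf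
  obtain ⟨hi, hj⟩ := lab_inj m n hm hn hmn he i i' jf jf' jf.isLt jf'.isLt hf
  subst hi
  simp only [Sigma.mk.inj_iff, heq_eq_eq, true_and]
  exact Fin.ext hj

lemma ncard_edges : (G m n).edgeSet.ncard = 3*(m+n)+3 := by
  rw [edgeSet_eq, ← Set.image_univ,
    Set.ncard_image_of_injOn ((edg_injective m n hm hn hmn he).injOn),
    Set.ncard_univ, Nat.card_eq_fintype_card]
  rw [← Nat.card_eq_fintype_card, Nat.card_sigma]
  simp [Fin.sum_univ_three, yy]
  omega

lemma fbij : Set.BijOn (f m n) (G m n).edgeSet (Set.Icc 1 (3*(m+n)+3)) := by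
  refine ⟨?_, ?_, ?_⟩
  · intro E hE
    obtain ⟨i, j, h, rfl⟩ := edge_repr m n hE
    rw [f_edg]
    have := lab_bounds m n hm hn hmn he i j h
    rw [Set.mem_Icc]
    unfold q at this
    omega
  · intro E hE E' hE' hf
    obtain ⟨i, j, h, rfl⟩ := edge_repr m n hE
    obtain ⟨i', j', h', rfl⟩ := edge_repr m n hE'
    rw [f_edg, f_edg] at hf
    obtain ⟨hi, hj⟩ := lab_inj m n hm hn hmn he i i' j j' h h' hf
    subst hi; subst hj
    rfl
  · intro l hl
    rw [Set.mem_Icc] at hl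
    obtain ⟨i, j, h, hlab⟩ := lab_surj m n hm hn hmn he l hl.1 (by unfold q; omega)
    exact ⟨edg m n i j h, edg_mem m n i j h, by rw [f_edg]; exact hlab⟩

lemma vs_none : vertexSum (G m n) (f m n) none = C m n := by
  rw [gvs_core]
  have h0 := f_core m n 0 (ypos m n 0)
  have h1 := f_core m n 1 (ypos m n 1)
  have h2 := f_core m n 2 (ypos m n 2)
  rw [h0, h1, h2]
  exact core_sum m n hm hn hmn he

lemma vs_int (i : Fin 3) (j : ℕ) (h : j < yy m n i) (h2 : j + 1 < yy m n i) :
    vertexSum (G m n) (f m n) (vtx m n i j h) = lab m n i j + lab m n i (j+1) := by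
  rw [gvs_int m n (f m n) i j h h2, f_edg, f_edg]

lemma vs_pend (i : Fin 3) (j : ℕ) (h : j < yy m n i) (h1 : 1 ≤ j) (h2 : j + 1 = yy m n i) :
    vertexSum (G m n) (f m n) (vtx m n i j h) = lab m n i j := by
  rw [gvs_pend m n (f m n) i j h h1 h2, f_edg]

lemma sum21 : lab m n 2 1 + lab m n 2 2 = 3*(m+n)+3 := by
  rw [lab2, lab2]; unfold Z; split_ifs <;> omega

lemma pend_vals (i : Fin 3) :
    lab m n i (yy m n i - 1) = 3*(m+n)+1 ∨ lab m n i (yy m n i - 1) = 3*(m+n)+2 ∨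
      lab m n i (yy m n i - 1) = 3*(m+n)+3 := by
  have hab := hab m n; have ha1 := ha1 m n hm hn hmn he; have hal := haleb m n
  rcases cover m n i with rfl | rfl | rfl
  · rw [y2, show m+n+1-1 = m+n by omega, pend2 m n hm hn hmn he]; omega
  · rw [ys, show 2*(a m n)+1-1 = 2*(a m n) by omega, pendS m n hm hn hmn he]; unfold q; omega
  · rw [yl, show 2*(b m n)+1-1 = 2*(b m n) by omega, pendL m n hm hn hmn he]; omega

lemma vs_vals (v : V m n) : vertexSum (G m n) (f m n) v ∈
    ({3*(m+n)+1, 3*(m+n)+2, 3*(m+n)+3, C m n} : Set ℕ) := by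
  match v with
  | none =>
    rw [vs_none m n hm hn hmn he]
    simp
  | some ⟨i, jf⟩ =>
    have hv : (some ⟨i, jf⟩ : V m n) = vtx m n i (jf : ℕ) jf.isLt := rfl
    rcases Nat.lt_or_ge ((jf : ℕ) + 1) (yy m n i) with hc | hc
    · rw [hv, vs_int m n hm hn hmn he i (jf : ℕ) jf.isLt hc]
      rcases Nat.even_or_odd (jf : ℕ) with hp | hp
      · rw [sum_even m n hm hn hmn he i (jf : ℕ) (Nat.even_iff.mp hp) (by omega)]
        simp
      · rcases sum_odd m n hm hn hmn he i (jf : ℕ) (Nat.odd_iff.mp hp) (by omega) with h | h <;>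
          rw [h] <;> simp
    · have hpe : (jf : ℕ) + 1 = yy m n i := by have := jf.isLt; omega
      have h1 : 1 ≤ (jf : ℕ) := by have := y3 m n hm hn hmn he i; omega
      rw [hv, vs_pend m n hm hn hmn he i (jf : ℕ) jf.isLt h1 hpe]
      have := pend_vals m n hm hn hmn he i
      rw [show yy m n i - 1 = (jf : ℕ) by omega] at this
      rcases this with h | h | h <;> rw [h] <;> simp

lemma range_vs : Set.range (vertexSum (G m n) (f m n)) =
    ({3*(m+n)+1, 3*(m+n)+2, 3*(m+n)+3, C m n} : Set ℕ) := by
  apply Set.Subset.antisymm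
  · rintro x ⟨v, rfl⟩
    exact vs_vals m n hm hn hmn he v
  · have hy2 := y2 m n
    rintro x (rfl | rfl | rfl | rfl)
    · refine ⟨vtx m n 2 0 (by omega), ?_⟩
      rw [vs_int m n hm hn hmn he 2 0 (by omega) (by omega)]
      exact sum_even m n hm hn hmn he 2 0 rfl (by omega)
    · refine ⟨vtx m n 2 (m+n) (by omega), ?_⟩
      rw [vs_pend m n hm hn hmn he 2 (m+n) (by omega) (by omega) (by omega)]
      exact pend2 m n hm hn hmn he
    · refine ⟨vtx m n 2 1 (by omega), ?_⟩
      rw [vs_int m n hm hn hmn he 2 1 (by omega) (by omega)]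
      exact sum21 m n hm hn hmn he
    · exact ⟨none, vs_none m n hm hn hmn he⟩

lemma colors4 : colorCount (G m n) (f m n) = 4 := by
  rw [colorCount, range_vs m n hm hn hmn he]
  rw [show ({3*(m+n)+1, 3*(m+n)+2, 3*(m+n)+3, C m n} : Set ℕ) =
    (↑({3*(m+n)+1, 3*(m+n)+2, 3*(m+n)+3, C m n} : Finset ℕ) : Set ℕ) by simp]
  rw [Set.ncard_coe_finset]
  have hC : C m n = 4*(m+n)+4 := rfl
  rw [Finset.card_insert_of_notMem (by simp [hC]; omega),
    Finset.card_insert_of_notMem (by simp [hC]; omega),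
    Finset.card_insert_of_notMem (by simp [hC]; omega), Finset.card_singleton]

lemma step_ne (i : Fin 3) (j : ℕ) (h : j < yy m n i) (h2 : j + 1 < yy m n i) :
    vertexSum (G m n) (f m n) (vtx m n i j h) ≠
      vertexSum (G m n) (f m n) (vtx m n i (j+1) h2) := by
  have hab := hab m n; have ha1 := ha1 m n hm hn hmn he; have hal := haleb m n
  have hC : C m n = 4*(m+n)+4 := rfl
  rw [vs_int m n hm hn hmn he i j h h2]
  rcases Nat.lt_or_ge (j+2) (yy m n i) with hc | hc
  · rw [vs_int m n hm hn hmn he i (j+1) h2 hc]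
    rcases Nat.even_or_odd j with hp | hp
    · have hp' := Nat.even_iff.mp hp
      rw [sum_even m n hm hn hmn he i j hp' (by omega)]
      rcases sum_odd m n hm hn hmn he i (j+1) (by omega) (by omega) with hh | hh <;>
        rw [hh] <;> omega
    · have hp' := Nat.odd_iff.mp hp
      rw [sum_even m n hm hn hmn he i (j+1) (by omega) (by omega)]
      rcases sum_odd m n hm hn hmn he i j hp' (by omega) with hh | hh <;>
        rw [hh] <;> omega
  · have hpe : (j+1) + 1 = yy m n i := by omega
    rw [vs_pend m n hm hn hmn he i (j+1) h2 (by omega) hpe]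
    rcases cover m n i with rfl | rfl | rfl
    · rw [y2] at hpe
      have hodd : j % 2 = 1 := by omega
      rcases sum_odd m n hm hn hmn he 2 j hodd (by rw [y2]; omega) with hh | hh <;>
        rw [hh, show j+1 = m+n by omega, pend2 m n hm hn hmn he] <;> omega
    · rw [ys] at hpe
      have hj : j = 2*(a m n)-1 := by omega
      subst hj
      have hq : lab m n (sidx m n) (2*(a m n)-1) + lab m n (sidx m n) (2*(a m n)-1+1) = C m n := by
        have := junctionS m n hm hn hmn he
        rw [show 2*(a m n)-1+1 = 2*(a m n) by omega]
        exact this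
      rw [hq, show 2*(a m n)-1+1 = 2*(a m n) by omega, pendS m n hm hn hmn he]
      unfold q
      omega
    · rw [yl] at hpe
      have hodd : j % 2 = 1 := by omega
      rcases sum_odd m n hm hn hmn he (lidx m n) j hodd (by rw [yl]; omega) with hh | hh <;>
        rw [hh, show j+1 = 2*(b m n) by omega, pendL m n hm hn hmn he] <;> omega

lemma core_ne (i : Fin 3) :
    vertexSum (G m n) (f m n) none ≠
      vertexSum (G m n) (f m n) (vtx m n i 0 (ypos m n i)) := by
  rw [vs_none m n hm hn hmn he, vs_int m n hm hn hmn he i 0 (ypos m n i)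
    (by have := y3 m n hm hn hmn he i; omega)]
  rw [sum_even m n hm hn hmn he i 0 rfl (by have := y3 m n hm hn hmn he i; omega)]
  have hC : C m n = 4*(m+n)+4 := rfl
  omega

lemma antimagic : ∀ ⦃x y : V m n⦄, (G m n).Adj x y →
    vertexSum (G m n) (f m n) x ≠ vertexSum (G m n) (f m n) y := by
  intro x y hadj
  match x, y with
  | none, v =>
    obtain ⟨i, rfl⟩ := (adj_none m n v).mp hadj
    exact core_ne m n hm hn hmn he i
  | some ⟨i, jf⟩, v =>
    rcases (adj_some m n i jf v).mp hadj with ⟨hj0, rfl⟩ | ⟨k, hk | hk, rfl⟩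
    · have hj : jf = ⟨0, ypos m n i⟩ := Fin.ext hj0
      rw [hj]
      exact (core_ne m n hm hn hmn he i).symm
    · -- k + 1 = jf
      have hk' : (k:ℕ) + 1 = (jf:ℕ) := hk
      have h1 : (some ⟨i, jf⟩ : V m n) = vtx m n i ((k:ℕ)+1) (by rw [hk']; exact jf.isLt) := by
        unfold vtx; rw [show (⟨(k:ℕ)+1, _⟩ : Fin (yy m n i)) = jf from Fin.ext hk']
      have h2 : (some ⟨i, k⟩ : V m n) = vtx m n i (k:ℕ) k.isLt := rfl
      rw [h1, h2]
      exact (step_ne m n hm hn hmn he i (k:ℕ) k.isLt (by omega)).symm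
    · -- jf + 1 = k
      have hk' : (jf:ℕ) + 1 = (k:ℕ) := hk
      have h1 : (some ⟨i, k⟩ : V m n) = vtx m n i ((jf:ℕ)+1) (by rw [hk']; exact k.isLt) := by
        unfold vtx; rw [show (⟨(jf:ℕ)+1, _⟩ : Fin (yy m n i)) = k from Fin.ext hk']
      have h2 : (some ⟨i, jf⟩ : V m n) = vtx m n i (jf:ℕ) jf.isLt := rfl
      rw [h1, h2]
      exact step_ne m n hm hn hmn he i (jf:ℕ) jf.isLt (by omega)

lemma lower (g : Sym2 (V m n) → ℕ) (hg : IsLocalAntimagic (G m n) g) :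
    4 ≤ colorCount (G m n) g := by
  obtain ⟨hbij, -⟩ := hg
  rw [ncard_edges m n hm hn hmn he] at hbij
  have hy3 := y3 m n hm hn hmn he
  have hpl : ∀ i : Fin 3, yy m n i - 1 < yy m n i := fun i => by have := hy3 i; omega
  have hp1 : ∀ i : Fin 3, 1 ≤ yy m n i - 1 := fun i => by have := hy3 i; omega
  have hvs : ∀ i : Fin 3, vertexSum (G m n) g (vtx m n i (yy m n i - 1) (hpl i)) =
      g (edg m n i (yy m n i - 1) (hpl i)) := fun i =>
    gvs_pend m n g i (yy m n i - 1) (hpl i) (hp1 i) (by have := hy3 i; omega)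
  have hne : ∀ i i' : Fin 3, i ≠ i' →
      g (edg m n i (yy m n i - 1) (hpl i)) ≠ g (edg m n i' (yy m n i' - 1) (hpl i')) := by
    intro i i' hii hgg
    have heq := hbij.injOn (edg_mem m n _ _ _) (edg_mem m n _ _ _) hgg
    have hf := congrArg (f m n) heq
    rw [f_edg, f_edg] at hf
    exact hii (lab_inj m n hm hn hmn he i i' _ _ (hpl i) (hpl i') hf).1
  set w : Fin 3 → ℕ := fun i => g (edg m n i (yy m n i - 1) (hpl i)) with hw
  have hsub : ({w 0, w 1, w 2} : Set ℕ) ⊆ Set.range (vertexSum (G m n) g) := by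
    rintro x (rfl | rfl | rfl)
    exacts [⟨_, hvs 0⟩, ⟨_, hvs 1⟩, ⟨_, hvs 2⟩]
  have hfin : (Set.range (vertexSum (G m n) g)).Finite := Set.finite_range _
  have hcard3 : ({w 0, w 1, w 2} : Set ℕ).ncard = 3 := by
    rw [show ({w 0, w 1, w 2} : Set ℕ) = (↑({w 0, w 1, w 2} : Finset ℕ) : Set ℕ) by simp,
      Set.ncard_coe_finset]
    rw [Finset.card_insert_of_notMem
        (by simp [hne 0 1 (by decide), hne 0 2 (by decide)]; exact ⟨hne 0 1 (by decide), hne 0 2 (by decide)⟩),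
      Finset.card_insert_of_notMem (by simp [hne 1 2 (by decide)]; exact hne 1 2 (by decide)), Finset.card_singleton]
  have hge3 : 3 ≤ colorCount (G m n) g := by
    rw [colorCount, ← hcard3]
    exact Set.ncard_le_ncard hsub hfin
  rcases Nat.lt_or_ge (colorCount (G m n) g) 4 with hc | hc
  · exfalso
    have hc3 : (Set.range (vertexSum (G m n) g)).ncard = 3 := by
      rw [colorCount] at hge3 hc; omega
    have heq3 : ({w 0, w 1, w 2} : Set ℕ) = Set.range (vertexSum (G m n) g) :=
      Set.eq_of_subset_of_ncard_le hsub (by omega) hfin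
    have hle : ∀ x ∈ Set.range (vertexSum (G m n) g), x ≤ 3*(m+n)+3 := by
      rw [← heq3]
      rintro x (rfl | rfl | rfl) <;>
        exact (Set.mem_Icc.mp (hbij.mapsTo (edg_mem m n _ _ _))).2
    obtain ⟨E, hE, hgE⟩ := hbij.surjOn (show (3*(m+n)+3:ℕ) ∈ Set.Icc 1 (3*(m+n)+3) by
      rw [Set.mem_Icc]; omega)
    obtain ⟨i, j, h, rfl⟩ := edge_repr m n hE
    have hone : ∀ (i' : Fin 3) (j' : ℕ) (h' : j' < yy m n i'),
        1 ≤ g (edg m n i' j' h') := fun i' j' h' =>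
      (Set.mem_Icc.mp (hbij.mapsTo (edg_mem m n _ _ _))).1
    by_cases hj0 : j = 0
    · subst hj0
      have hcore : vertexSum (G m n) g none =
          g (edg m n 0 0 (ypos m n 0)) + g (edg m n 1 0 (ypos m n 1)) +
            g (edg m n 2 0 (ypos m n 2)) := by
        rw [gvs_core]
        have hrw : ∀ i' : Fin 3, s(none, vtx m n i' 0 (ypos m n i')) =
            edg m n i' 0 (ypos m n i') := by
          intro i'; unfold edg; rw [if_pos rfl]
        rw [hrw 0, hrw 1, hrw 2]
      have hbig : 3*(m+n)+3 + 1 ≤ vertexSum (G m n) g none := by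
        rw [hcore]
        have e0 := hone 0 0 (ypos m n 0)
        have e1 := hone 1 0 (ypos m n 1)
        have e2 := hone 2 0 (ypos m n 2)
        fin_cases i <;>
          [(have : g (edg m n 0 0 (ypos m n 0)) = 3*(m+n)+3 := hgE);
           (have : g (edg m n 1 0 (ypos m n 1)) = 3*(m+n)+3 := hgE);
           (have : g (edg m n 2 0 (ypos m n 2)) = 3*(m+n)+3 := hgE)] <;>
          omega
      have := hle _ ⟨none, rfl⟩
      omega
    · rcases Nat.lt_or_ge (j+1) (yy m n i) with hcj | hcj
      · have hA := gvs_int m n g i j h hcj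
        have hbig : 3*(m+n)+3 + 1 ≤ vertexSum (G m n) g (vtx m n i j h) := by
          rw [hA, hgE]
          have := hone i (j+1) hcj
          omega
        have := hle _ ⟨vtx m n i j h, rfl⟩
        omega
      · obtain ⟨j', rfl⟩ : ∃ j'', j = j'' + 1 := ⟨j-1, by omega⟩
        have hxj : j' < yy m n i := by omega
        have hA := gvs_int m n g i j' hxj h
        have hbig : 3*(m+n)+3 + 1 ≤ vertexSum (G m n) g (vtx m n i j' hxj) := by
          rw [hA, hgE]
          have := hone i j' hxj
          omega
        have := hle _ ⟨vtx m n i j' hxj, rfl⟩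
        omega
  · exact hc

end main
end Sp

theorem stmt17 (m n : ℕ) (hm : 2 ≤ m) (hn : 1 ≤ n) (hmn : 4 ≤ m + n)
    (he : Even (m + n)) :
    chiLA (spider 3 ![2 * n + 1, 2 * m + 1, n + m + 1]) = 4 := by
  have he' : (m+n) % 2 = 0 := Nat.even_iff.mp he
  show chiLA (Sp.G m n) = 4
  have h4 : 4 ∈ {k | ∃ g : Sym2 (Sp.V m n) → ℕ,
      IsLocalAntimagic (Sp.G m n) g ∧ colorCount (Sp.G m n) g = k} := by
    refine ⟨Sp.f m n, ⟨?_, Sp.antimagic m n hm hn hmn he'⟩,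
      Sp.colors4 m n hm hn hmn he'⟩
    rw [Sp.ncard_edges m n hm hn hmn he']
    exact Sp.fbij m n hm hn hmn he'
  rw [chiLA]
  apply le_antisymm
  · exact Nat.sInf_le h4
  · apply le_csInf ⟨4, h4⟩
    rintro k ⟨g, hg, rfl⟩
    exact Sp.lower m n hm hn hmn he' g hg
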